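/- arXiv:1403.6689 — 2 statements merged into one kernel-verified Lean document; each statement's English description precedes it below -/
import Mathlib

section
/- In the extended infinitary system, the generalization of the weak law of the excluded middle ⋁_{J⊆I}( ¬⋁_{j∈I∖J} F_j ∧ ¬¬⋀_{j∈J} F_j ) is a theorem, for any non-empty bounded family (F_i)_{i∈I} of infinitary formulas. -/
open Classical

/-- Infinitary propositional formulas over a signature `σ`: atoms, set-indexed
conjunctions and disjunctions (represented by families indexed by a type,
which corresponds exactly to *bounded* sets of formulas in the hierarchy),
and implication. -/
inductive IForm (σ : Type) : Type 1
  | atom : σ → IForm σ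
  | conj : (ι : Type) → (ι → IForm σ) → IForm σ
  | disj : (ι : Type) → (ι → IForm σ) → IForm σ
  | impl : IForm σ → IForm σ → IForm σ

namespace IForm

variable {σ : Type}

/-- `⊥` is the empty disjunction. -/
def bot : IForm σ := disj Empty Empty.elim

/-- `¬F` abbreviates `F → ⊥`. -/
def neg (F : IForm σ) : IForm σ := impl F bot

/-- Binary conjunction `F ∧ G` as `{F, G}^∧`. -/
def and2 (F G : IForm σ) : IForm σ := conj Bool (fun b => cond b F G)

/-- Binary disjunction `F ∨ G` as `{F, G}^∨`. -/
def or2 (F G : IForm σ) : IForm σ := disj Bool (fun b => cond b F G)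

/-- Ternary disjunction. -/
def or3 (F G H : IForm σ) : IForm σ := disj (Fin 3) (fun i => [F, G, H].get i)

/-- `F ↔ G` abbreviates `(F → G) ∧ (G → F)`. -/
def biimp (F G : IForm σ) : IForm σ := and2 (impl F G) (impl G F)

/-- Satisfaction of an infinitary formula by an interpretation `I ⊆ σ`. -/
def sat (I : Set σ) : IForm σ → Prop
  | atom p => p ∈ I
  | conj _ f => ∀ i, sat I (f i)
  | disj _ f => ∃ i, sat I (f i)
  | impl F G => sat I F → sat I G

/-- The reduct `F^I` of a formula w.r.t. an interpretation `I`. -/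
noncomputable def reduct (I : Set σ) : IForm σ → IForm σ
  | atom p => if p ∈ I then atom p else bot
  | conj ι f => conj ι (fun i => reduct I (f i))
  | disj ι f => disj ι (fun i => reduct I (f i))
  | impl F G => if sat I (impl F G) then impl (reduct I F) (reduct I G) else bot

/-- `I` satisfies a set of formulas if it satisfies all its elements. -/
def satSet (I : Set σ) (H : Set (IForm σ)) : Prop := ∀ F ∈ H, sat I F

/-- `I` is a stable model of a set `H` of formulas if it is minimal w.r.t.
set inclusion among the interpretations satisfying the reduct `H^I`. -/
def StableModel (I : Set σ) (H : Set (IForm σ)) : Prop :=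
  satSet I (reduct I '' H) ∧ ∀ J : Set σ, satSet J (reduct I '' H) → J ⊆ I → J = I

noncomputable instance : DecidableEq (IForm σ) := Classical.decEq _

/-- The basic infinitary system of natural deduction: sequents `Γ ⇒ F` where
`Γ` is a finite set of infinitary formulas.  Axiom `F ⇒ F`; introduction and
elimination rules for set-indexed conjunction and disjunction and for
implication; weakening. -/
inductive Deriv : Finset (IForm σ) → IForm σ → Prop
  | ax (F : IForm σ) : Deriv {F} F
  | conjI (Γ : Finset (IForm σ)) (ι : Type) (f : ι → IForm σ) :
      (∀ i, Deriv Γ (f i)) → Deriv Γ (conj ι f)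
  | conjE (Γ : Finset (IForm σ)) (ι : Type) (f : ι → IForm σ) (i : ι) :
      Deriv Γ (conj ι f) → Deriv Γ (f i)
  | disjI (Γ : Finset (IForm σ)) (ι : Type) (f : ι → IForm σ) (i : ι) :
      Deriv Γ (f i) → Deriv Γ (disj ι f)
  | disjE (Γ Δ : Finset (IForm σ)) (ι : Type) (f : ι → IForm σ) (F : IForm σ) :
      Deriv Γ (disj ι f) → (∀ i, Deriv (insert (f i) Δ) F) → Deriv (Γ ∪ Δ) F
  | implI (Γ : Finset (IForm σ)) (F G : IForm σ) :
      Deriv (insert F Γ) G → Deriv Γ (impl F G)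
  | implE (Γ Δ : Finset (IForm σ)) (F G : IForm σ) :
      Deriv Γ F → Deriv Δ (impl F G) → Deriv (Γ ∪ Δ) G
  | weak (Γ Δ : Finset (IForm σ)) (F : IForm σ) :
      Deriv Γ F → Deriv (Γ ∪ Δ) F

end IForm
namespace IForm

variable {σ : Type}

/-- The extended system: the basic system plus the axiom schemas
`F ∨ (F → G) ∨ ¬G` (Hosoi), the converse infinitary De Morgan law
`¬⋀ F → ⋁ ¬F`, and the two converse infinitary distributivity laws
(for non-empty families). -/
inductive DerivE : Finset (IForm σ) → IForm σ → Prop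
  | ax (F : IForm σ) : DerivE {F} F
  | conjI (Γ : Finset (IForm σ)) (ι : Type) (f : ι → IForm σ) :
      (∀ i, DerivE Γ (f i)) → DerivE Γ (conj ι f)
  | conjE (Γ : Finset (IForm σ)) (ι : Type) (f : ι → IForm σ) (i : ι) :
      DerivE Γ (conj ι f) → DerivE Γ (f i)
  | disjI (Γ : Finset (IForm σ)) (ι : Type) (f : ι → IForm σ) (i : ι) :
      DerivE Γ (f i) → DerivE Γ (disj ι f)
  | disjE (Γ Δ : Finset (IForm σ)) (ι : Type) (f : ι → IForm σ) (F : IForm σ) :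
      DerivE Γ (disj ι f) → (∀ i, DerivE (insert (f i) Δ) F) → DerivE (Γ ∪ Δ) F
  | implI (Γ : Finset (IForm σ)) (F G : IForm σ) :
      DerivE (insert F Γ) G → DerivE Γ (impl F G)
  | implE (Γ Δ : Finset (IForm σ)) (F G : IForm σ) :
      DerivE Γ F → DerivE Δ (impl F G) → DerivE (Γ ∪ Δ) G
  | weak (Γ Δ : Finset (IForm σ)) (F : IForm σ) :
      DerivE Γ F → DerivE (Γ ∪ Δ) F
  | hosoi (F G : IForm σ) : DerivE ∅ (or3 F (impl F G) (neg G))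
  | demConv (ι : Type) (f : ι → IForm σ) :
      DerivE ∅ (impl (neg (conj ι f)) (disj ι fun i => neg (f i)))
  | distConv1 (ι : Type) [Nonempty ι] (κ : ι → Type) (g : (i : ι) → κ i → IForm σ) :
      DerivE ∅ (impl (conj ι fun i => disj (κ i) (g i))
                     (disj ((i : ι) → κ i) fun c => conj ι fun i => g i (c i)))
  | distConv2 (ι : Type) [Nonempty ι] (κ : ι → Type) (g : (i : ι) → κ i → IForm σ) :
      DerivE ∅ (impl (conj ((i : ι) → κ i) fun c => disj ι fun i => g i (c i))
                     (disj ι fun i => conj (κ i) (g i)))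

/-- The classical extended system: like the extended system, but with the
Hosoi axiom schema replaced by the law of the excluded middle `F ∨ ¬F`. -/
inductive DerivC : Finset (IForm σ) → IForm σ → Prop
  | ax (F : IForm σ) : DerivC {F} F
  | conjI (Γ : Finset (IForm σ)) (ι : Type) (f : ι → IForm σ) :
      (∀ i, DerivC Γ (f i)) → DerivC Γ (conj ι f)
  | conjE (Γ : Finset (IForm σ)) (ι : Type) (f : ι → IForm σ) (i : ι) :
      DerivC Γ (conj ι f) → DerivC Γ (f i)
  | disjI (Γ : Finset (IForm σ)) (ι : Type) (f : ι → IForm σ) (i : ι) :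
      DerivC Γ (f i) → DerivC Γ (disj ι f)
  | disjE (Γ Δ : Finset (IForm σ)) (ι : Type) (f : ι → IForm σ) (F : IForm σ) :
      DerivC Γ (disj ι f) → (∀ i, DerivC (insert (f i) Δ) F) → DerivC (Γ ∪ Δ) F
  | implI (Γ : Finset (IForm σ)) (F G : IForm σ) :
      DerivC (insert F Γ) G → DerivC Γ (impl F G)
  | implE (Γ Δ : Finset (IForm σ)) (F G : IForm σ) :
      DerivC Γ F → DerivC Δ (impl F G) → DerivC (Γ ∪ Δ) G
  | weak (Γ Δ : Finset (IForm σ)) (F : IForm σ) :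
      DerivC Γ F → DerivC (Γ ∪ Δ) F
  | lem (F : IForm σ) : DerivC ∅ (or2 F (neg F))
  | demConv (ι : Type) (f : ι → IForm σ) :
      DerivC ∅ (impl (neg (conj ι f)) (disj ι fun i => neg (f i)))
  | distConv1 (ι : Type) [Nonempty ι] (κ : ι → Type) (g : (i : ι) → κ i → IForm σ) :
      DerivC ∅ (impl (conj ι fun i => disj (κ i) (g i))
                     (disj ((i : ι) → κ i) fun c => conj ι fun i => g i (c i)))
  | distConv2 (ι : Type) [Nonempty ι] (κ : ι → Type) (g : (i : ι) → κ i → IForm σ) :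
      DerivC ∅ (impl (conj ((i : ι) → κ i) fun c => disj ι fun i => g i (c i))
                     (disj ι fun i => conj (κ i) (g i)))

end IForm


namespace IForm

variable {σ : Type}

theorem DerivE.weak' {Γ Δ : Finset (IForm σ)} {F : IForm σ}
    (h : DerivE Γ F) (hs : Γ ⊆ Δ) : DerivE Δ F := by
  have := DerivE.weak Γ Δ F h
  rwa [Finset.union_eq_right.mpr hs] at this

theorem DerivE.hyp {Γ : Finset (IForm σ)} {F : IForm σ} (h : F ∈ Γ) : DerivE Γ F :=
  (DerivE.ax F).weak' (Finset.singleton_subset_iff.mpr h)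

theorem DerivE.implE' {Γ : Finset (IForm σ)} {F G : IForm σ}
    (h1 : DerivE Γ F) (h2 : DerivE Γ (impl F G)) : DerivE Γ G := by
  have := DerivE.implE Γ Γ F G h1 h2
  rwa [Finset.union_self] at this

theorem DerivE.disjE' {Γ : Finset (IForm σ)} {ι : Type} {f : ι → IForm σ} {F : IForm σ}
    (h1 : DerivE Γ (disj ι f)) (h2 : ∀ i, DerivE (insert (f i) Γ) F) : DerivE Γ F := by
  have := DerivE.disjE Γ Γ ι f F h1 h2
  rwa [Finset.union_self] at this

/-- weak law of excluded middle `¬¬G ∨ ¬G` from the Hosoi axiom -/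
theorem DerivE.wlem (G : IForm σ) :
    DerivE (∅ : Finset (IForm σ)) (disj Bool fun b => cond b (neg (neg G)) (neg G)) := by
  have h := DerivE.hosoi (σ := σ) (neg G) G
  refine h.disjE' (fun i => ?_)
  fin_cases i
  · exact DerivE.disjI _ Bool _ false (DerivE.hyp (by simp))
  · refine DerivE.disjI _ Bool _ true ?_
    show DerivE _ (neg (neg G))
    refine DerivE.implI _ _ _ ?_
    have hnG : DerivE (insert (neg G) (insert (impl (neg G) G) ∅)) (neg G) :=
      DerivE.hyp (by simp)
    have hi : DerivE (insert (neg G) (insert (impl (neg G) G) ∅)) (impl (neg G) G) :=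
      DerivE.hyp (by simp)
    exact (hnG.implE' hi).implE' hnG
  · exact DerivE.disjI _ Bool _ false (DerivE.hyp (by simp))

end IForm

open IForm in
/-- In the extended system, the generalization of the weak law
of the excluded middle `⋁_{J⊆I}( ¬⋁_{j∈I∖J} F_j ∧ ¬¬⋀_{j∈J} F_j )` is a
theorem, for any non-empty family `(F_i)_{i∈I}` of formulas. -/
theorem extended_weak_lem {σ : Type} (I : Type) [Nonempty I] (F : I → IForm σ) :
    DerivE ∅ (disj (Set I) fun J => and2
      (neg (disj {j : I // j ∉ J} fun j => F j.1))
      (neg (neg (conj {j : I // j ∈ J} fun j => F j.1)))) := by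
  classical
  set g : I → Bool → IForm σ := fun i b => cond b (neg (neg (F i))) (neg (F i)) with hg
  have h1 : DerivE (∅ : Finset (IForm σ)) (conj I fun i => disj Bool (g i)) :=
    DerivE.conjI _ _ _ (fun i => DerivE.wlem (F i))
  have h3 : DerivE (∅ : Finset (IForm σ)) (disj (I → Bool) fun c => conj I fun i => g i (c i)) :=
    h1.implE' (DerivE.distConv1 I (fun _ => Bool) g)
  refine h3.disjE' (fun c => ?_)
  set Γc : Finset (IForm σ) := insert (conj I fun i => g i (c i)) ∅ with hΓc
  have hC : DerivE Γc (conj I fun i => g i (c i)) := DerivE.hyp (by simp [hΓc])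
  refine DerivE.disjI _ _ _ ({i | c i = true} : Set I) ?_
  show DerivE Γc (and2 (neg (disj {j : I // j ∉ {i | c i = true}} fun j => F j.1))
      (neg (neg (conj {j : I // j ∈ {i | c i = true}} fun j => F j.1))))
  refine DerivE.conjI _ _ _ (fun b => ?_)
  cases b
  · -- ¬¬⋀_{j∈J} F_j
    show DerivE Γc (neg (neg (conj {j : I // j ∈ {i | c i = true}} fun j => F j.1)))
    refine DerivE.implI _ _ _ ?_
    set Γ1 := insert (neg (conj {j : I // j ∈ {i | c i = true}} fun j => F j.1)) Γc with hΓ1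
    have hd : DerivE Γ1 (impl (neg (conj {j : I // j ∈ {i | c i = true}} fun j => F j.1))
        (disj {j : I // j ∈ {i | c i = true}} fun j => neg (F j.1))) :=
      (DerivE.demConv _ _).weak' (Finset.empty_subset _)
    have hdis := (DerivE.hyp (Finset.mem_insert_self _ _)).implE' hd
    refine hdis.disjE' (fun j => ?_)
    have hnF : DerivE (insert (neg (F j.1)) Γ1) (neg (F j.1)) :=
      DerivE.hyp (Finset.mem_insert_self _ _)
    have hC2 : DerivE (insert (neg (F j.1)) Γ1) (conj I fun i => g i (c i)) :=
      hC.weak' ((Finset.subset_insert _ Γc).trans (Finset.subset_insert _ Γ1))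
    have hCj := DerivE.conjE _ I (fun i => g i (c i)) j.1 hC2
    have hcj : c j.1 = true := j.2
    rw [hg] at hCj
    simp only [hcj, cond_true] at hCj
    exact hnF.implE' hCj
  · -- ¬⋁_{j∉J} F_j
    show DerivE Γc (neg (disj {j : I // j ∉ {i | c i = true}} fun j => F j.1))
    refine DerivE.implI _ _ _ ?_
    set Γ1 := insert (disj {j : I // j ∉ {i | c i = true}} fun j => F j.1) Γc with hΓ1
    have hdis : DerivE Γ1 (disj {j : I // j ∉ {i | c i = true}} fun j => F j.1) :=
      DerivE.hyp (Finset.mem_insert_self _ _)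
    refine hdis.disjE' (fun j => ?_)
    have hF : DerivE (insert (F j.1) Γ1) (F j.1) := DerivE.hyp (Finset.mem_insert_self _ _)
    have hC2 : DerivE (insert (F j.1) Γ1) (conj I fun i => g i (c i)) :=
      hC.weak' ((Finset.subset_insert _ Γc).trans (Finset.subset_insert _ Γ1))
    have hCj := DerivE.conjE _ I (fun i => g i (c i)) j.1 hC2
    have hcj : c j.1 = false := by
      have := j.2; simpa [Set.mem_setOf_eq] using this
    rw [hg] at hCj
    simp only [hcj, cond_false] at hCj
    exact hF.implE' hCj
end

section
/- For any sequent S and interpretation I, if S is a theorem of the extended infinitary system, then S^I is a theorem of the classical extended system, obtained by replacing the axiom schema F ∨ (F→G) ∨ ¬G with the law of the excluded middle F ∨ ¬F. -/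
open Classical

namespace IForm

variable {σ : Type}

lemma sat_bot (I : Set σ) : ¬ sat I (bot : IForm σ) := fun ⟨i, _⟩ => i.elim

lemma reduct_bot (I : Set σ) : reduct I (bot : IForm σ) = bot := by
  show disj Empty (fun i => reduct I (Empty.elim i)) = disj Empty Empty.elim
  congr 1
  funext i
  exact i.elim

lemma reduct_impl_pos {I : Set σ} {F G : IForm σ} (hs : sat I (impl F G)) :
    reduct I (impl F G) = impl (reduct I F) (reduct I G) := by
  simp only [reduct]
  rw [if_pos hs]

lemma reduct_neg_pos {I : Set σ} {G : IForm σ} (hs : ¬ sat I G) :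
    reduct I (neg G) = impl (reduct I G) bot := by
  have hsat : sat I (impl G bot) := fun hg => absurd hg hs
  show reduct I (impl G bot) = _
  rw [reduct_impl_pos hsat, reduct_bot]

lemma soundE (I : Set σ) : ∀ {Γ : Finset (IForm σ)} {F : IForm σ}, DerivE Γ F →
    (∀ G ∈ Γ, sat I G) → sat I F := by
  intro Γ F h
  induction h with
  | ax F => exact fun hΓ => hΓ F (Finset.mem_singleton_self F)
  | conjI Γ ι f _ ih => exact fun hΓ i => ih i hΓ
  | conjE Γ ι f i _ ih => exact fun hΓ => ih hΓ i
  | disjI Γ ι f i _ ih => exact fun hΓ => ⟨i, ih hΓ⟩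
  | disjE Γ Δ ι f F _ _ ih1 ih2 =>
      intro hΓ
      obtain ⟨i, hi⟩ := ih1 (fun G hG => hΓ G (Finset.mem_union_left _ hG))
      refine ih2 i (fun G hG => ?_)
      rcases Finset.mem_insert.mp hG with h | h
      · exact h ▸ hi
      · exact hΓ G (Finset.mem_union_right _ h)
  | implI Γ F G _ ih =>
      intro hΓ hF
      refine ih (fun H hH => ?_)
      rcases Finset.mem_insert.mp hH with h | h
      · exact h ▸ hF
      · exact hΓ H h
  | implE Γ Δ F G _ _ ih1 ih2 =>
      intro hΓ
      exact ih2 (fun H hH => hΓ H (Finset.mem_union_right _ hH))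
        (ih1 (fun H hH => hΓ H (Finset.mem_union_left _ hH)))
  | weak Γ Δ F _ ih => exact fun hΓ => ih (fun H hH => hΓ H (Finset.mem_union_left _ hH))
  | hosoi F G =>
      intro _
      by_cases hG : sat I G
      · exact ⟨⟨1, by norm_num⟩, fun _ => hG⟩
      · exact ⟨⟨2, by norm_num⟩, fun h => absurd h hG⟩
  | demConv ι f =>
      intro _ hn
      by_cases hc : ∀ i, sat I (f i)
      · exact absurd (hn hc) (sat_bot I)
      · push_neg at hc
        obtain ⟨i, hi⟩ := hc
        exact ⟨i, fun h => absurd h hi⟩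
  | distConv1 ι κ g =>
      intro _ h
      choose c hc using h
      exact ⟨c, hc⟩
  | distConv2 ι κ g =>
      intro _ h
      by_contra hcon
      have hk : ∀ i, ∃ k, ¬ sat I (g i k) := by
        intro i
        by_contra hk'
        push_neg at hk'
        exact hcon ⟨i, hk'⟩
      choose c hc using hk
      obtain ⟨i, hi⟩ := h c
      exact hc i hi

lemma weaken {Γ Δ : Finset (IForm σ)} {F : IForm σ} (h : DerivC Γ F) (hsub : Γ ⊆ Δ) :
    DerivC Δ F := by
  have := DerivC.weak Γ Δ F h
  rwa [Finset.union_eq_right.mpr hsub] at this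

lemma exFalso {Γ : Finset (IForm σ)} {F : IForm σ} (h : DerivC Γ (bot : IForm σ)) :
    DerivC Γ F := by
  have := DerivC.disjE Γ Γ Empty Empty.elim F h (fun i => i.elim)
  rwa [Finset.union_self] at this

lemma cut {Γ : Finset (IForm σ)} {A B : IForm σ}
    (h1 : DerivC Γ A) (h2 : DerivC {A} B) : DerivC Γ B := by
  have h3 : DerivC ∅ (impl A B) := DerivC.implI ∅ A B (by simpa using h2)
  have := DerivC.implE Γ ∅ A B h1 h3
  rwa [Finset.union_empty] at this

lemma refute (I : Set σ) : ∀ (F : IForm σ), ¬ sat I F →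
    DerivC {reduct I F} (bot : IForm σ) := by
  intro F
  induction F with
  | atom p =>
      intro hns
      have hp : p ∉ I := hns
      have e : reduct I (atom p) = bot := by
        simp only [reduct]
        rw [if_neg hp]
      rw [e]
      exact DerivC.ax bot
  | conj ι f ih =>
      intro hns
      have hex : ∃ i, ¬ sat I (f i) := by
        by_contra hk
        push_neg at hk
        exact hns hk
      obtain ⟨i, hi⟩ := hex
      have h1 : DerivC {reduct I (conj ι f)} (reduct I (f i)) :=
        DerivC.conjE _ ι (fun j => reduct I (f j)) i (DerivC.ax (reduct I (conj ι f)))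
      exact cut h1 (ih i hi)
  | disj ι f ih =>
      intro hns
      have hall : ∀ i, ¬ sat I (f i) := fun i hi => hns ⟨i, hi⟩
      have := DerivC.disjE {reduct I (disj ι f)} ∅ ι (fun j => reduct I (f j)) bot
        (DerivC.ax (reduct I (disj ι f))) (fun i => by simpa using ih i (hall i))
      simpa using this
  | impl F G _ _ =>
      intro hns
      have e : reduct I (impl F G) = bot := by
        simp only [reduct]
        rw [if_neg hns]
      rw [e]
      exact DerivC.ax bot

lemma unsatCtx {Γ : Finset (IForm σ)} {G : IForm σ} (I : Set σ) (hG : G ∈ Γ)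
    (hns : ¬ sat I G) (X : IForm σ) : DerivC (Γ.image (reduct I)) X :=
  exFalso (weaken (refute I G hns)
    (Finset.singleton_subset_iff.mpr (Finset.mem_image_of_mem _ hG)))

end IForm

/-- For any sequent `Γ ⇒ F` and interpretation `I`, if `Γ ⇒ F`
is a theorem of the extended system, then its reduct `Γ^I ⇒ F^I` is a
theorem of the classical extended system. -/
theorem extended_reduct_classical {σ : Type} (Γ : Finset (IForm σ))
    (F : IForm σ) (I : Set σ) (h : IForm.DerivE Γ F) :
    IForm.DerivC (Γ.image (IForm.reduct I)) (IForm.reduct I F) := by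
  induction h with
  | ax F =>
      rw [Finset.image_singleton]
      exact IForm.DerivC.ax _
  | conjI Γ ι f _ ih =>
      exact IForm.DerivC.conjI _ ι (fun i => IForm.reduct I (f i)) ih
  | conjE Γ ι f i _ ih =>
      exact IForm.DerivC.conjE _ ι (fun j => IForm.reduct I (f j)) i ih
  | disjI Γ ι f i _ ih =>
      exact IForm.DerivC.disjI _ ι (fun j => IForm.reduct I (f j)) i ih
  | disjE Γ Δ ι f F _ _ ih1 ih2 =>
      rw [Finset.image_union]
      exact IForm.DerivC.disjE _ _ ι (fun j => IForm.reduct I (f j)) _ ih1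
        (fun i => by rw [← Finset.image_insert]; exact ih2 i)
  | implI Γ F G hd ih =>
      by_cases hs : IForm.sat I (IForm.impl F G)
      · rw [IForm.reduct_impl_pos hs]
        apply IForm.DerivC.implI
        rw [← Finset.image_insert]
        exact ih
      · have hF : IForm.sat I F := by
          by_contra hF
          exact hs (fun h => absurd h hF)
        have hG : ¬ IForm.sat I G := fun hg => hs (fun _ => hg)
        have hctx : ¬ ∀ H ∈ insert F Γ, IForm.sat I H :=
          fun hh => hG (IForm.soundE I hd hh)
        push_neg at hctx
        obtain ⟨H, hHmem, hHns⟩ := hctx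
        rcases Finset.mem_insert.mp hHmem with h | h
        · subst h; exact absurd hF hHns
        · exact IForm.unsatCtx I h hHns _
  | implE Γ Δ F G hd1 hd2 ih1 ih2 =>
      by_cases hs : IForm.sat I (IForm.impl F G)
      · rw [Finset.image_union]
        rw [IForm.reduct_impl_pos hs] at ih2
        exact IForm.DerivC.implE _ _ _ _ ih1 ih2
      · have hctx : ¬ ∀ H ∈ Δ, IForm.sat I H := fun hh => hs (IForm.soundE I hd2 hh)
        push_neg at hctx
        obtain ⟨H, hHmem, hHns⟩ := hctx
        exact IForm.unsatCtx I (Finset.mem_union_right _ hHmem) hHns _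
  | weak Γ Δ F _ ih =>
      rw [Finset.image_union]
      exact IForm.DerivC.weak _ _ _ ih
  | hosoi F G =>
      rw [Finset.image_empty]
      show IForm.DerivC ∅
        (IForm.disj (Fin 3) fun i => IForm.reduct I ([F, IForm.impl F G, IForm.neg G].get i))
      by_cases hG : IForm.sat I G
      · have hFG : IForm.sat I (IForm.impl F G) := fun _ => hG
        set rF := IForm.reduct I F with hrF
        have branches : ∀ b : Bool, IForm.DerivC
            (insert (cond b rF (IForm.neg rF)) ∅)
            (IForm.disj (Fin 3) fun i =>
              IForm.reduct I ([F, IForm.impl F G, IForm.neg G].get i)) := by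
          intro b
          cases b with
          | true =>
              apply IForm.DerivC.disjI _ (Fin 3) _ ⟨0, by norm_num⟩
              show IForm.DerivC _ (IForm.reduct I F)
              exact IForm.weaken (IForm.DerivC.ax rF) (by simp)
          | false =>
              apply IForm.DerivC.disjI _ (Fin 3) _ ⟨1, by norm_num⟩
              show IForm.DerivC _ (IForm.reduct I (IForm.impl F G))
              rw [IForm.reduct_impl_pos hFG]
              apply IForm.DerivC.implI
              have hbot : IForm.DerivC ({rF} ∪ {IForm.neg rF}) (IForm.bot : IForm σ) :=
                IForm.DerivC.implE {rF} {IForm.neg rF} rF IForm.bot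
                  (IForm.DerivC.ax rF) (IForm.DerivC.ax (IForm.neg rF))
              have hg : IForm.DerivC ({rF} ∪ {IForm.neg rF}) (IForm.reduct I G) :=
                IForm.exFalso hbot
              exact IForm.weaken hg (by intro x hx; simp at hx ⊢; tauto)
        have := IForm.DerivC.disjE ∅ ∅ Bool (fun b => cond b rF (IForm.neg rF)) _
          (IForm.DerivC.lem rF) branches
        simpa using this
      · apply IForm.DerivC.disjI _ (Fin 3) _ ⟨2, by norm_num⟩
        show IForm.DerivC ∅ (IForm.reduct I (IForm.neg G))
        rw [IForm.reduct_neg_pos hG]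
        apply IForm.DerivC.implI
        exact IForm.weaken (IForm.refute I G hG) (by simp)
  | demConv ι f =>
      rw [Finset.image_empty]
      by_cases hc : ∀ i, IForm.sat I (f i)
      · have hns : ¬ IForm.sat I (IForm.neg (IForm.conj ι f)) :=
          fun hn => absurd (hn hc) (IForm.sat_bot I)
        have hsat : IForm.sat I (IForm.impl (IForm.neg (IForm.conj ι f))
            (IForm.disj ι fun i => IForm.neg (f i))) := fun hn => absurd hn hns
        rw [IForm.reduct_impl_pos hsat]
        have e : IForm.reduct I (IForm.neg (IForm.conj ι f)) = IForm.bot := by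
          have hns' : ¬ IForm.sat I (IForm.impl (IForm.conj ι f) IForm.bot) := hns
          show IForm.reduct I (IForm.impl (IForm.conj ι f) IForm.bot) = IForm.bot
          simp only [IForm.reduct]
          rw [if_neg hns']
        rw [e]
        apply IForm.DerivC.implI
        apply IForm.exFalso
        exact IForm.weaken (IForm.DerivC.ax IForm.bot) (by simp)
      · push_neg at hc
        obtain ⟨i, hi⟩ := hc
        have hsat : IForm.sat I (IForm.impl (IForm.neg (IForm.conj ι f))
            (IForm.disj ι fun j => IForm.neg (f j))) :=
          fun _ => ⟨i, fun hf => absurd hf hi⟩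
        rw [IForm.reduct_impl_pos hsat]
        have hcons : IForm.DerivC ∅ (IForm.reduct I (IForm.disj ι fun j => IForm.neg (f j))) := by
          show IForm.DerivC ∅ (IForm.disj ι fun j => IForm.reduct I (IForm.neg (f j)))
          apply IForm.DerivC.disjI _ ι _ i
          show IForm.DerivC ∅ (IForm.reduct I (IForm.neg (f i)))
          rw [IForm.reduct_neg_pos hi]
          apply IForm.DerivC.implI
          exact IForm.weaken (IForm.refute I (f i) hi) (by simp)
        apply IForm.DerivC.implI
        exact IForm.weaken hcons (by simp)
  | distConv1 ι κ g =>
      rw [Finset.image_empty]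
      have key : (∀ i, ∃ k, IForm.sat I (g i k)) →
          ∃ c : (i : ι) → κ i, ∀ i, IForm.sat I (g i (c i)) := by
        intro h
        choose c hc using h
        exact ⟨c, hc⟩
      have hsat : IForm.sat I (IForm.impl (IForm.conj ι fun i => IForm.disj (κ i) (g i))
          (IForm.disj ((i : ι) → κ i) fun c => IForm.conj ι fun i => g i (c i))) := key
      rw [IForm.reduct_impl_pos hsat]
      exact IForm.DerivC.distConv1 ι κ (fun i k => IForm.reduct I (g i k))
  | distConv2 ι κ g =>
      rw [Finset.image_empty]
      have key : (∀ c : (i : ι) → κ i, ∃ i, IForm.sat I (g i (c i))) →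
          ∃ i, ∀ k, IForm.sat I (g i k) := by
        intro h
        by_contra hcon
        have hk : ∀ i, ∃ k, ¬ IForm.sat I (g i k) := by
          intro i
          by_contra hk'
          push_neg at hk'
          exact hcon ⟨i, hk'⟩
        choose c hc using hk
        obtain ⟨i, hi⟩ := h c
        exact hc i hi
      have hsat : IForm.sat I
          (IForm.impl (IForm.conj ((i : ι) → κ i) fun c => IForm.disj ι fun i => g i (c i))
            (IForm.disj ι fun i => IForm.conj (κ i) (g i))) := key
      rw [IForm.reduct_impl_pos hsat]
      exact IForm.DerivC.distConv2 ι κ (fun i k => IForm.reduct I (g i k))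
end
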